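/- Let μ_σ and μ_ε be nonzero positive finite Borel measures on [0,1] satisfying the thermodynamical restriction (T). Then for every ω > 0: Φ_σ(iω) ≠ 0, and both the storage modulus and loss modulus are nonnegative, i.e., Re(Φ_ε(iω)/Φ_σ(iω)) ≥ 0 and Im(Φ_ε(iω)/Φ_σ(iω)) ≥ 0. -/

import Mathlib

open MeasureTheory Complex Set

/-- `Phi μ s = ∫₀¹ s^α dμ(α)`, with the principal branch of the complex power. -/
noncomputable def Phi (μ : Measure ℝ) (s : ℂ) : ℂ :=
  ∫ α in Set.Icc (0:ℝ) 1, s ^ (α : ℂ) ∂μ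

/-- The thermodynamical restriction (T): the signed measure `μ_ε × μ_σ − μ_σ × μ_ε`
is nonnegative on the triangle `Δ = {(α,β) ∈ [0,1]² : α > β}`. -/
def TDrestriction (μσ με : Measure ℝ) : Prop :=
  ∀ E : Set (ℝ × ℝ), MeasurableSet E →
    E ⊆ {p : ℝ × ℝ | p.2 < p.1 ∧ p.1 ∈ Set.Icc (0:ℝ) 1 ∧ p.2 ∈ Set.Icc (0:ℝ) 1} →
    (μσ.prod με) E ≤ (με.prod μσ) E

private lemma one_le_cos_add_sin {x : ℝ} (h0 : 0 ≤ x) (h1 : x ≤ Real.pi/2) :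
    1 ≤ Real.cos x + Real.sin x := by
  have hπ := Real.pi_pos
  have hc : 0 ≤ Real.cos x := Real.cos_nonneg_of_mem_Icc ⟨by linarith, h1⟩
  have hs : 0 ≤ Real.sin x := Real.sin_nonneg_of_nonneg_of_le_pi h0 (by linarith)
  nlinarith [Real.sin_sq_add_cos_sq x, mul_nonneg hc hs]

private lemma cpow_omegaI (ω : ℝ) (hω : 0 < ω) (α : ℝ) :
    (((ω:ℂ) * Complex.I) ^ (α:ℂ)).re
        = Real.exp (α * Real.log ω) * Real.cos (α * (Real.pi/2))
    ∧ (((ω:ℂ) * Complex.I) ^ (α:ℂ)).im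
        = Real.exp (α * Real.log ω) * Real.sin (α * (Real.pi/2)) := by
  have hne : (ω:ℂ) * Complex.I ≠ 0 :=
    mul_ne_zero (Complex.ofReal_ne_zero.2 hω.ne') Complex.I_ne_zero
  have hlog : Complex.log ((ω:ℂ)*Complex.I)
      = (Real.log ω : ℂ) + (Real.pi/2) * Complex.I := by
    have habs : ‖(ω:ℂ)*Complex.I‖ = ω := by
      simp [norm_mul, Complex.norm_real, abs_of_pos hω]
    have harg : ((ω:ℂ)*Complex.I).arg = Real.pi/2 := by
      rw [Complex.arg_real_mul _ hω, Complex.arg_I]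
    rw [Complex.log, habs, harg]; push_cast; ring
  rw [Complex.cpow_def_of_ne_zero hne, hlog]
  constructor
  · rw [Complex.exp_re]
    simp [Complex.add_re, Complex.add_im, Complex.mul_re, Complex.mul_im]
    ring_nf
  · rw [Complex.exp_im]
    simp [Complex.add_re, Complex.add_im, Complex.mul_re, Complex.mul_im]
    ring_nf

private lemma cpow_cont (ω : ℝ) (hω : 0 < ω) :
    Continuous (fun α : ℝ => ((ω:ℂ) * Complex.I) ^ (α:ℂ)) := by
  have hne : (ω:ℂ) * Complex.I ≠ 0 :=
    mul_ne_zero (Complex.ofReal_ne_zero.2 hω.ne') Complex.I_ne_zero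
  have : (fun α : ℝ => ((ω:ℂ) * Complex.I) ^ (α:ℂ))
      = fun α : ℝ => Complex.exp (Complex.log ((ω:ℂ)*Complex.I) * (α:ℂ)) :=
    funext fun α => Complex.cpow_def_of_ne_zero hne _
  rw [this]
  exact Complex.continuous_exp.comp (continuous_const.mul Complex.continuous_ofReal)


set_option maxHeartbeats 1000000 in
theorem stmt_5 (μσ με : Measure ℝ) [IsFiniteMeasure μσ] [IsFiniteMeasure με]
    (hσ : μσ ≠ 0) (hε : με ≠ 0)
    (hσsupp : μσ (Set.Icc (0:ℝ) 1)ᶜ = 0) (hεsupp : με (Set.Icc (0:ℝ) 1)ᶜ = 0)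
    (hT : TDrestriction μσ με) :
    ∀ ω : ℝ, 0 < ω →
      Phi μσ ((ω : ℂ) * Complex.I) ≠ 0
      ∧ 0 ≤ (Phi με ((ω : ℂ) * Complex.I) / Phi μσ ((ω : ℂ) * Complex.I)).re
      ∧ 0 ≤ (Phi με ((ω : ℂ) * Complex.I) / Phi μσ ((ω : ℂ) * Complex.I)).im := by
  intro ω hω
  set s : ℂ := (ω:ℂ) * Complex.I with hsdef
  set I01 : Set ℝ := Set.Icc (0:ℝ) 1 with hI01
  have hmeas01 : MeasurableSet I01 := measurableSet_Icc
  set νσ : Measure ℝ := μσ.restrict I01 with hνσ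
  set νε : Measure ℝ := με.restrict I01 with hνε
  haveI : IsFiniteMeasure νσ := inferInstance
  haveI : IsFiniteMeasure νε := inferInstance
  set R : ℝ → ℝ := fun α => Real.exp (α * Real.log ω) with hR
  set gc : ℝ → ℝ := fun α => R α * Real.cos (α * (Real.pi/2)) with hgc
  set gs : ℝ → ℝ := fun α => R α * Real.sin (α * (Real.pi/2)) with hgs
  have hre : ∀ α : ℝ, (s ^ (α:ℂ)).re = gc α := fun α => (cpow_omegaI ω hω α).1
  have him : ∀ α : ℝ, (s ^ (α:ℂ)).im = gs α := fun α => (cpow_omegaI ω hω α).2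
  have hRcont : Continuous R := Real.continuous_exp.comp (continuous_id.mul continuous_const)
  have hgccont : Continuous gc := hRcont.mul (Real.continuous_cos.comp (continuous_id.mul continuous_const))
  have hgscont : Continuous gs := hRcont.mul (Real.continuous_sin.comp (continuous_id.mul continuous_const))
  -- integrability
  have intf_σ : Integrable (fun α : ℝ => s ^ (α:ℂ)) νσ :=
    ContinuousOn.integrableOn_compact isCompact_Icc ((cpow_cont ω hω).continuousOn)
  have intf_ε : Integrable (fun α : ℝ => s ^ (α:ℂ)) νε :=
    ContinuousOn.integrableOn_compact isCompact_Icc ((cpow_cont ω hω).continuousOn)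
  have intgc_σ : Integrable gc νσ := ContinuousOn.integrableOn_compact isCompact_Icc hgccont.continuousOn
  have intgs_σ : Integrable gs νσ := ContinuousOn.integrableOn_compact isCompact_Icc hgscont.continuousOn
  have intgc_ε : Integrable gc νε := ContinuousOn.integrableOn_compact isCompact_Icc hgccont.continuousOn
  have intgs_ε : Integrable gs νε := ContinuousOn.integrableOn_compact isCompact_Icc hgscont.continuousOn
  -- the four moments
  set a : ℝ := ∫ α, gc α ∂νσ with ha
  set b : ℝ := ∫ α, gs α ∂νσ with hb
  set c : ℝ := ∫ α, gc α ∂νε with hc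
  set d : ℝ := ∫ α, gs α ∂νε with hd
  have hPhiσre : (Phi μσ s).re = a := by
    rw [Phi, ha]
    rw [show (∫ α in Set.Icc (0:ℝ) 1, s ^ (α:ℂ) ∂μσ) = ∫ α, s ^ (α:ℂ) ∂νσ from rfl]
    rw [← RCLike.re_to_complex, ← integral_re intf_σ]
    exact (integral_congr_ae (Filter.Eventually.of_forall fun α => by
      rw [RCLike.re_to_complex, hre α])).symm
  have hPhiσim : (Phi μσ s).im = b := by
    rw [Phi, hb, show (∫ α in Set.Icc (0:ℝ) 1, s ^ (α:ℂ) ∂μσ) = ∫ α, s ^ (α:ℂ) ∂νσ from rfl,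
      ← RCLike.im_to_complex, ← integral_im intf_σ]
    exact (integral_congr_ae (Filter.Eventually.of_forall fun α => by
      rw [RCLike.im_to_complex, him α])).symm
  have hPhiεre : (Phi με s).re = c := by
    rw [Phi, hc, show (∫ α in Set.Icc (0:ℝ) 1, s ^ (α:ℂ) ∂με) = ∫ α, s ^ (α:ℂ) ∂νε from rfl,
      ← RCLike.re_to_complex, ← integral_re intf_ε]
    exact (integral_congr_ae (Filter.Eventually.of_forall fun α => by
      rw [RCLike.re_to_complex, hre α])).symm
  have hPhiεim : (Phi με s).im = d := by
    rw [Phi, hd, show (∫ α in Set.Icc (0:ℝ) 1, s ^ (α:ℂ) ∂με) = ∫ α, s ^ (α:ℂ) ∂νε from rfl,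
      ← RCLike.im_to_complex, ← integral_im intf_ε]
    exact (integral_congr_ae (Filter.Eventually.of_forall fun α => by
      rw [RCLike.im_to_complex, him α])).symm
  have hπ := Real.pi_pos
  -- pointwise nonnegativity on I01
  have hgcnn : ∀ α ∈ I01, 0 ≤ gc α := by
    intro α hα
    exact mul_nonneg (Real.exp_pos _).le
      (Real.cos_nonneg_of_mem_Icc ⟨by nlinarith [hα.1, hα.2], by nlinarith [hα.1, hα.2]⟩)
  have hgsnn : ∀ α ∈ I01, 0 ≤ gs α := by
    intro α hα
    exact mul_nonneg (Real.exp_pos _).le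
      (Real.sin_nonneg_of_nonneg_of_le_pi (by nlinarith [hα.1]) (by nlinarith [hα.1, hα.2]))
  have hann : 0 ≤ a := setIntegral_nonneg hmeas01 hgcnn
  have hbnn : 0 ≤ b := setIntegral_nonneg hmeas01 hgsnn
  have hcnn : 0 ≤ c := setIntegral_nonneg hmeas01 hgcnn
  have hdnn : 0 ≤ d := setIntegral_nonneg hmeas01 hgsnn
  -- positivity of a + b
  have habpos : 0 < a + b := by
    set c0 : ℝ := Real.exp (min 0 (Real.log ω)) with hc0
    have hc0pos : 0 < c0 := Real.exp_pos _
    have hbound : ∀ α ∈ I01, c0 ≤ gc α + gs α := by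
      intro α hα
      have h1 : c0 ≤ R α := by
        rw [hc0, hR]
        apply Real.exp_le_exp.2
        rcases le_or_gt 0 (Real.log ω) with h | h
        · have := min_le_left (0:ℝ) (Real.log ω); nlinarith [hα.1]
        · have := min_le_right (0:ℝ) (Real.log ω); nlinarith [hα.2]
      have h2 : 1 ≤ Real.cos (α * (Real.pi/2)) + Real.sin (α * (Real.pi/2)) :=
        one_le_cos_add_sin (by nlinarith [hα.1]) (by nlinarith [hα.2])
      have h3 : gc α + gs α = R α * (Real.cos (α * (Real.pi/2)) + Real.sin (α * (Real.pi/2))) := by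
        rw [hgc, hgs]; ring
      rw [h3]
      calc c0 = c0 * 1 := (mul_one _).symm
        _ ≤ R α * (Real.cos (α * (Real.pi/2)) + Real.sin (α * (Real.pi/2))) :=
            mul_le_mul h1 h2 zero_le_one (le_trans hc0pos.le h1)
    have hint : IntegrableOn (fun α => gc α + gs α) I01 μσ := intgc_σ.add intgs_σ
    have hub := setIntegral_ge_of_const_le hmeas01 (measure_ne_top μσ I01) hbound hint
    have hI01pos : 0 < (μσ I01).toReal := by
      refine ENNReal.toReal_pos ?_ (measure_ne_top μσ I01)
      intro h0
      apply hσ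
      have : μσ Set.univ = 0 := by
        have := measure_union_le (μ := μσ) I01 I01ᶜ
        rw [Set.union_compl_self, h0, hσsupp] at this
        simpa using this
      exact Measure.measure_univ_eq_zero.1 this
    have hsum : ∫ α in I01, (gc α + gs α) ∂μσ = a + b := by
      rw [ha, hb]
      exact integral_add intgc_σ intgs_σ
    rw [smul_eq_mul, measureReal_def] at hub
    nlinarith [hub, hsum ▸ hub]
  have hσne : Phi μσ s ≠ 0 := by
    intro h
    rw [Complex.ext_iff] at h
    rw [hPhiσre, hPhiσim, Complex.zero_re, Complex.zero_im] at h
    rw [h.1, h.2] at habpos; simp at habpos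
  -- the key inequality
  have hkey : c * b ≤ d * a := by
    set P : Measure (ℝ × ℝ) := νε.prod νσ with hP
    set Q : Measure (ℝ × ℝ) := νσ.prod νε with hQ
    set F : ℝ × ℝ → ℝ := fun z => gs z.1 * gc z.2 - gc z.1 * gs z.2 with hF
    have hFcont : Continuous F :=
      ((hgscont.comp continuous_fst).mul (hgccont.comp continuous_snd)).sub
        ((hgccont.comp continuous_fst).mul (hgscont.comp continuous_snd))
    have intFP : Integrable F P := (intgs_ε.mul_prod intgc_σ).sub (intgc_ε.mul_prod intgs_σ)
    set Δ : Set (ℝ×ℝ) := {p : ℝ×ℝ | p.2 < p.1} with hΔdef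
    have hΔ : MeasurableSet Δ := measurableSet_lt measurable_snd measurable_fst
    set Δ' : Set (ℝ×ℝ) := {p : ℝ×ℝ | p.1 < p.2} with hΔ'def
    have hΔ' : MeasurableSet Δ' := measurableSet_lt measurable_fst measurable_snd
    have h1 : d * a - c * b = ∫ z, F z ∂P := by
      rw [ha, hb, hc, hd, ← integral_prod_mul gs gc, ← integral_prod_mul gc gs,
        ← integral_sub (intgs_ε.mul_prod intgc_σ) (intgc_ε.mul_prod intgs_σ)]
    have h2 : ∫ z, F z ∂P = (∫ z in Δ, F z ∂P) + ∫ z in Δᶜ, F z ∂P :=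
      (integral_add_compl hΔ intFP).symm
    have h3 : ∫ z in Δᶜ, F z ∂P = ∫ z in Δ', F z ∂P := by
      have hcongr : Set.EqOn F (Δ'.indicator F) Δᶜ := by
        intro z hz
        by_cases h : z ∈ Δ'
        · rw [Set.indicator_of_mem h]
        · rw [Set.indicator_of_notMem h]
          have h12 : z.1 ≤ z.2 := not_lt.1 hz
          have h21 : z.2 ≤ z.1 := not_lt.1 h
          have hzz : z.1 = z.2 := le_antisymm h12 h21
          rw [hF]
          simp only [hzz]
          ring
      have hzero : ∫ z in Δ, Δ'.indicator F z ∂P = 0 := by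
        have : Set.EqOn (Δ'.indicator F) (fun _ => (0:ℝ)) Δ := by
          intro z hz
          have hz' : z.2 < z.1 := hz
          show Δ'.indicator F z = (0:ℝ)
          refine Set.indicator_of_notMem ?_ F
          intro h
          exact lt_asymm hz' (show z.1 < z.2 from h)
        rw [setIntegral_congr_fun hΔ this, integral_zero]
      calc ∫ z in Δᶜ, F z ∂P = ∫ z in Δᶜ, Δ'.indicator F z ∂P :=
            setIntegral_congr_fun hΔ.compl hcongr
        _ = ∫ z, Δ'.indicator F z ∂P := by
            rw [← integral_add_compl hΔ (intFP.indicator hΔ'), hzero, zero_add]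
        _ = ∫ z in Δ', F z ∂P := integral_indicator hΔ'
    have h4 : ∫ z in Δ', F z ∂P = - ∫ z in Δ, F z ∂Q := by
      have hswapP : P = Measure.map Prod.swap Q := by
        rw [hP, hQ, Measure.prod_swap]
      rw [← integral_indicator hΔ', hswapP,
        integral_map measurable_swap.aemeasurable
          ((hFcont.measurable.indicator hΔ').aestronglyMeasurable)]
      have hpt : ∀ z : ℝ×ℝ, Δ'.indicator F (Prod.swap z) = Δ.indicator (fun w => -F w) z := by
        intro z
        by_cases h : z ∈ Δ
        · rw [Set.indicator_of_mem h, Set.indicator_of_mem (by exact h : Prod.swap z ∈ Δ')]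
          rw [hF]
          simp only [Prod.swap]
          ring
        · rw [Set.indicator_of_notMem h, Set.indicator_of_notMem (by exact h : Prod.swap z ∉ Δ')]
      rw [integral_congr_ae (Filter.Eventually.of_forall hpt), integral_indicator hΔ,
        integral_neg]
    have hle : Q.restrict Δ ≤ P.restrict Δ := by
      refine Measure.le_iff.2 fun t ht => ?_
      rw [Measure.restrict_apply ht, Measure.restrict_apply ht]
      have hQr : Q = (μσ.prod με).restrict (I01 ×ˢ I01) := by
        rw [hQ, hνσ, hνε, Measure.prod_restrict]
      have hPr : P = (με.prod μσ).restrict (I01 ×ˢ I01) := by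
        rw [hP, hνσ, hνε, Measure.prod_restrict]
      rw [hQr, hPr, Measure.restrict_apply (ht.inter hΔ), Measure.restrict_apply (ht.inter hΔ)]
      refine hT _ ((ht.inter hΔ).inter (hmeas01.prod hmeas01)) ?_
      rintro ⟨x, y⟩ ⟨⟨_, hxy⟩, hmem⟩
      exact ⟨hxy, hmem.1, hmem.2⟩
    have haeF : 0 ≤ᵐ[P.restrict Δ] F := by
      have hPr : P.restrict Δ = (με.prod μσ).restrict (Δ ∩ I01 ×ˢ I01) := by
        rw [hP, hνε, hνσ, Measure.prod_restrict, Measure.restrict_restrict hΔ]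
      rw [hPr]
      filter_upwards [ae_restrict_mem (hΔ.inter (hmeas01.prod hmeas01))] with z hz
      obtain ⟨hzΔ, hzm⟩ := hz
      have hzΔ' : z.2 < z.1 := hzΔ
      have hz1 : z.1 ∈ I01 := hzm.1
      have hz2 : z.2 ∈ I01 := hzm.2
      have heq : F z = R z.1 * R z.2 * Real.sin ((z.1 - z.2) * (Real.pi/2)) := by
        rw [hF, hgc, hgs, sub_mul, Real.sin_sub]
        ring
      rw [heq]
      refine mul_nonneg (mul_nonneg (Real.exp_pos _).le (Real.exp_pos _).le) ?_
      refine Real.sin_nonneg_of_nonneg_of_le_pi ?_ ?_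
      · nlinarith [hzΔ', hπ]
      · nlinarith [hz1.1, hz1.2, hz2.1, hz2.2, hπ]
    have h5 : ∫ z in Δ, F z ∂Q ≤ ∫ z in Δ, F z ∂P :=
      integral_mono_measure hle haeF intFP.restrict
    have hfinal : d * a - c * b = (∫ z in Δ, F z ∂P) - ∫ z in Δ, F z ∂Q := by
      rw [h1, h2, h3, h4]; ring
    linarith
  refine ⟨hσne, ?_, ?_⟩
  · rw [Complex.div_re, hPhiσre, hPhiσim, hPhiεre, hPhiεim]
    have hN : 0 ≤ Complex.normSq (Phi μσ s) := Complex.normSq_nonneg _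
    positivity
  · rw [Complex.div_im, hPhiσre, hPhiσim, hPhiεre, hPhiεim]
    rw [div_sub_div_same]
    exact div_nonneg (sub_nonneg.2 hkey) (Complex.normSq_nonneg _)
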